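/- Let (Ω, Σ, μ) be a nonatomic σ-finite measure space with μ(Ω) = ∞, let 1 ≤ p < ∞, and let θ : ℝ → ℝ be a continuous nonnegative function such that ∫_Ω θ(f(t)) dμ(t) < ∞ for every f ∈ Lᵖ(μ). Then there exists a ∈ ℝ such that θ(λ) ≤ a·|λ|^p for all λ ∈ ℝ. -/

import Mathlib

open MeasureTheory

section Aux

open Set ENNReal Filter

variable {Ω : Type*} [MeasurableSpace Ω] {μ : Measure Ω}


lemma aux_half (hna : ∀ A : Set Ω, MeasurableSet A → 0 < μ A →
      ∃ B ⊆ A, MeasurableSet B ∧ 0 < μ B ∧ μ B < μ A)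
    {A : Set Ω} (hA : MeasurableSet A) (h0 : 0 < μ A) (hfin : μ A < ⊤) :
    ∃ B ⊆ A, MeasurableSet B ∧ 0 < μ B ∧ μ B * 2 ≤ μ A := by
  obtain ⟨C, hCA, hCm, hC0, hClt⟩ := hna A hA h0
  have hsum : μ C + μ (A \ C) = μ A := by
    have := measure_inter_add_diff (μ := μ) A hCm
    rwa [Set.inter_eq_self_of_subset_right hCA] at this
  have hD0 : 0 < μ (A \ C) := by
    rcases eq_or_ne (μ (A \ C)) 0 with h | h
    · exfalso; rw [h, add_zero] at hsum; exact absurd hsum (ne_of_lt hClt)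
    · exact pos_iff_ne_zero.mpr h
  by_cases hc : μ C * 2 ≤ μ A
  · exact ⟨C, hCA, hCm, hC0, hc⟩
  · refine ⟨A \ C, Set.diff_subset, hA.diff hCm, hD0, ?_⟩
    by_contra hc2
    push_neg at hc hc2
    have h1 : μ A + μ A < μ C * 2 + μ (A \ C) * 2 :=
      ENNReal.add_lt_add hc hc2
    rw [mul_two, mul_two, add_add_add_comm, hsum] at h1
    exact lt_irrefl _ h1

lemma aux_small (hna : ∀ A : Set Ω, MeasurableSet A → 0 < μ A →
      ∃ B ⊆ A, MeasurableSet B ∧ 0 < μ B ∧ μ B < μ A)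
    {A : Set Ω} (hA : MeasurableSet A) (h0 : 0 < μ A) (hfin : μ A < ⊤)
    {ε : ℝ≥0∞} (hε : 0 < ε) :
    ∃ B ⊆ A, MeasurableSet B ∧ 0 < μ B ∧ μ B ≤ ε := by
  have key : ∀ n : ℕ, ∃ B ⊆ A, MeasurableSet B ∧ 0 < μ B ∧ μ B * 2 ^ n ≤ μ A := by
    intro n
    induction n with
    | zero => exact ⟨A, subset_rfl, hA, h0, by simp⟩
    | succ n ih =>
      obtain ⟨B, hBA, hBm, hB0, hBle⟩ := ih
      have hBfin : μ B < ⊤ := lt_of_le_of_lt (measure_mono hBA) hfin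
      obtain ⟨C, hCB, hCm, hC0, hCle⟩ := aux_half hna hBm hB0 hBfin
      refine ⟨C, hCB.trans hBA, hCm, hC0, ?_⟩
      calc μ C * 2 ^ (n + 1) = μ C * 2 * 2 ^ n := by ring
        _ ≤ μ B * 2 ^ n := by gcongr
        _ ≤ μ A := hBle
  obtain ⟨m, hm⟩ : ∃ m : ℕ, μ A / ε < m := ENNReal.exists_nat_gt (by
    exact (ENNReal.div_lt_top hfin.ne hε.ne').ne)
  obtain ⟨B, hBA, hBm, hB0, hBle⟩ := key m
  refine ⟨B, hBA, hBm, hB0, ?_⟩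
  have hmp : (m : ℝ≥0∞) ≤ 2 ^ m := by
    exact_mod_cast Nat.cast_le.mpr (Nat.lt_two_pow_self (n := m)).le
  have h2 : μ A ≤ ε * 2 ^ m := by
    rcases eq_or_ne ε ⊤ with rfl | hεt
    · simp [top_mul, (pow_ne_zero m (two_ne_zero (α := ℝ≥0∞)))]
    · have := (ENNReal.div_lt_iff (Or.inl hε.ne') (Or.inl hεt)).mp hm
      calc μ A ≤ (m : ℝ≥0∞) * ε := this.le
        _ ≤ 2 ^ m * ε := mul_le_mul_left hmp ε
        _ = ε * 2 ^ m := mul_comm _ _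
  have := hBle.trans h2
  have h2m : (2 : ℝ≥0∞) ^ m ≠ 0 := pow_ne_zero m (two_ne_zero)
  have h2mt : (2 : ℝ≥0∞) ^ m ≠ ⊤ := (ENNReal.pow_lt_top (n := m) (by norm_num)).ne
  exact (ENNReal.mul_le_mul_iff_left h2m h2mt).mp this

lemma aux_small_top [SigmaFinite μ] (hna : ∀ A : Set Ω, MeasurableSet A → 0 < μ A →
      ∃ B ⊆ A, MeasurableSet B ∧ 0 < μ B ∧ μ B < μ A)
    {S : Set Ω} (hS : MeasurableSet S) (hStop : μ S = ⊤)
    {ε : ℝ≥0∞} (hε : 0 < ε) :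
    ∃ B ⊆ S, MeasurableSet B ∧ 0 < μ B ∧ μ B ≤ ε := by
  have hmono : Monotone (fun n => S ∩ spanningSets μ n) :=
    fun a b hab => Set.inter_subset_inter_right _ (monotone_spanningSets μ hab)
  have hU : (⋃ n, S ∩ spanningSets μ n) = S := by
    rw [← Set.inter_iUnion, iUnion_spanningSets, Set.inter_univ]
  have hsup : ⨆ n, μ (S ∩ spanningSets μ n) = ⊤ := by
    rw [← hmono.directed_le.measure_iUnion, hU, hStop]
  obtain ⟨n, hn⟩ : ∃ n, 0 < μ (S ∩ spanningSets μ n) := by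
    by_contra hcon
    push_neg at hcon
    simp only [nonpos_iff_eq_zero] at hcon
    simp [hcon] at hsup
  have hfin : μ (S ∩ spanningSets μ n) < ⊤ :=
    lt_of_le_of_lt (measure_mono Set.inter_subset_right) (measure_spanningSets_lt_top μ n)
  obtain ⟨B, hB1, hB2, hB3, hB4⟩ :=
    aux_small hna (hS.inter (measurableSet_spanningSets μ n)) hn hfin hε
  exact ⟨B, hB1.trans Set.inter_subset_left, hB2, hB3, hB4⟩

lemma acc_succ {B : ℕ → Set Ω} (n : ℕ) :
    Set.accumulate B (n + 1) = Set.accumulate B n ∪ B (n + 1) := by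
  ext x
  simp only [Set.mem_accumulate, Set.mem_union, Nat.le_succ_iff]
  aesop

lemma aux_carve [SigmaFinite μ] (hna : ∀ A : Set Ω, MeasurableSet A → 0 < μ A →
      ∃ B ⊆ A, MeasurableSet B ∧ 0 < μ B ∧ μ B < μ A)
    {S : Set Ω} (hS : MeasurableSet S) (hStop : μ S = ⊤)
    {r : ℝ≥0∞} (hr0 : 0 < r) (hrt : r < ⊤) :
    ∃ B ⊆ S, MeasurableSet B ∧ r / 2 ≤ μ B ∧ μ B ≤ r := by
  by_contra hcon
  push_neg at hcon
  -- every admissible set has measure < r / 2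
  have hc : ∀ B, B ⊆ S → MeasurableSet B → μ B ≤ r → μ B < r / 2 := by
    intro B h1 h2 h3
    by_contra h4
    push_neg at h4
    exact absurd h3 ((hcon B h1 h2 h4).not_ge)
  have hr2 : 0 < r / 2 := ENNReal.div_pos hr0.ne' (by norm_num)
  set 𝒜 : Set (Set Ω) := {B | B ⊆ S ∧ MeasurableSet B ∧ μ B ≤ r} with h𝒜
  set s : ℝ≥0∞ := ⨆ (B : Set Ω) (_ : B ∈ 𝒜), μ B with hs
  have hle : ∀ B ∈ 𝒜, μ B ≤ s := fun B hB => le_iSup₂ (f := fun B (_ : B ∈ 𝒜) => μ B) B hB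
  have hsle : s ≤ r / 2 := iSup₂_le fun B hB => (hc B hB.1 hB.2.1 hB.2.2).le
  have hst : s < ⊤ := lt_of_le_of_lt hsle (lt_of_le_of_lt (ENNReal.half_le_self) hrt)
  have hs0 : 0 < s := by
    obtain ⟨B, hB1, hB2, hB3, hB4⟩ := aux_small_top hna hS hStop hr2
    exact lt_of_lt_of_le hB3 (hle B ⟨hB1, hB2, hB4.trans ENNReal.half_le_self⟩)
  -- choose a sequence approaching the sup
  have hseq : ∀ n : ℕ, ∃ B ∈ 𝒜, s - ((n : ℝ≥0∞) + 1)⁻¹ < μ B := by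
    intro n
    have hlt : s - ((n : ℝ≥0∞) + 1)⁻¹ < s :=
      ENNReal.sub_lt_self hst.ne hs0.ne' (ENNReal.inv_ne_zero.mpr (by simp))
    rw [hs] at hlt
    obtain ⟨B, hB⟩ := lt_iSup_iff.mp hlt
    obtain ⟨hBmem, hB⟩ := lt_iSup_iff.mp hB
    exact ⟨B, hBmem, hB⟩
  choose B hBmem hBlt using hseq
  -- accumulated unions stay in 𝒜
  have hacc : ∀ n, Set.accumulate B n ∈ 𝒜 := by
    intro n
    induction n with
    | zero =>
      have : Set.accumulate B 0 = B 0 := by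
        ext x; simp [Set.mem_accumulate, Nat.le_zero]
      rw [this]; exact hBmem 0
    | succ n ih =>
      rw [acc_succ]
      have h1 : μ (Set.accumulate B n ∪ B (n + 1)) ≤ μ (Set.accumulate B n) + μ (B (n + 1)) :=
        measure_union_le _ _
      refine ⟨Set.union_subset ih.1 (hBmem (n + 1)).1, ih.2.1.union (hBmem (n + 1)).2.1, ?_⟩
      calc μ (Set.accumulate B n ∪ B (n + 1)) ≤ μ (Set.accumulate B n) + μ (B (n + 1)) := h1
        _ ≤ r / 2 + r / 2 := add_le_add (hc _ ih.1 ih.2.1 ih.2.2).le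
            (hc _ (hBmem _).1 (hBmem _).2.1 (hBmem _).2.2).le
        _ = r := ENNReal.add_halves r
  set C : Set Ω := ⋃ n, B n with hC
  have hCacc : C = ⋃ n, Set.accumulate B n := (Set.iUnion_accumulate).symm
  have hCm : MeasurableSet C := MeasurableSet.iUnion fun n => (hBmem n).2.1
  have hCS : C ⊆ S := Set.iUnion_subset fun n => (hBmem n).1
  have hCμ : μ C ≤ r / 2 := by
    rw [hCacc, (Set.monotone_accumulate).directed_le.measure_iUnion]
    exact iSup_le fun n => (hc _ (hacc n).1 (hacc n).2.1 (hacc n).2.2).le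
  have hCs : s ≤ μ C := by
    refine ENNReal.le_of_forall_pos_le_add fun ε hε hC' => ?_
    obtain ⟨n, hn⟩ := ENNReal.exists_inv_nat_lt (a := (ε : ℝ≥0∞)) (by exact_mod_cast hε.ne')
    have h1 : s ≤ μ (B n) + ((n : ℝ≥0∞) + 1)⁻¹ := by
      calc s ≤ s - ((n : ℝ≥0∞) + 1)⁻¹ + ((n : ℝ≥0∞) + 1)⁻¹ := le_tsub_add
        _ ≤ μ (B n) + ((n : ℝ≥0∞) + 1)⁻¹ := add_le_add_left (hBlt n).le _
    have h2 : ((n : ℝ≥0∞) + 1)⁻¹ ≤ (n : ℝ≥0∞)⁻¹ := by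
      gcongr; exact le_add_of_nonneg_right zero_le_one
    calc s ≤ μ (B n) + ((n : ℝ≥0∞) + 1)⁻¹ := h1
      _ ≤ μ C + ε := add_le_add (measure_mono (Set.subset_iUnion B n)) (h2.trans hn.le)
  -- carve another piece from S \ C
  have hCfin : μ C < ⊤ := lt_of_le_of_lt hCμ (lt_of_le_of_lt ENNReal.half_le_self hrt)
  have hSCtop : μ (S \ C) = ⊤ := by
    by_contra h
    have h1 : μ S ≤ μ C + μ (S \ C) := by
      calc μ S ≤ μ (C ∪ (S \ C)) := measure_mono (fun x hx => by
              by_cases hxC : x ∈ C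
              · exact Or.inl hxC
              · exact Or.inr ⟨hx, hxC⟩)
        _ ≤ μ C + μ (S \ C) := measure_union_le _ _
    have h2 : μ C + μ (S \ C) < ⊤ := ENNReal.add_lt_top.mpr ⟨hCfin, lt_top_iff_ne_top.mpr h⟩
    rw [hStop] at h1
    exact absurd (lt_of_le_of_lt h1 h2) (lt_irrefl ⊤)
  obtain ⟨D, hD1, hD2, hD3, hD4⟩ := aux_small_top hna (hS.diff hCm) hSCtop hr2
  have hDC : Disjoint C D := Set.disjoint_left.mpr fun x hxC hxD => (hD1 hxD).2 hxC
  have hE : C ∪ D ∈ 𝒜 := by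
    refine ⟨Set.union_subset hCS (hD1.trans Set.diff_subset), hCm.union hD2, ?_⟩
    calc μ (C ∪ D) ≤ μ C + μ D := measure_union_le _ _
      _ ≤ r / 2 + r / 2 := add_le_add hCμ hD4
      _ = r := ENNReal.add_halves r
  have : μ (C ∪ D) = μ C + μ D := measure_union hDC hD2
  have hgt : s < μ (C ∪ D) := by
    rw [this]
    calc s ≤ μ C := hCs
      _ < μ C + μ D := ENNReal.lt_add_right hCfin.ne hD3.ne'
  exact absurd (hle _ hE) hgt.not_ge

lemma aux_family [SigmaFinite μ] (hna : ∀ A : Set Ω, MeasurableSet A → 0 < μ A →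
      ∃ B ⊆ A, MeasurableSet B ∧ 0 < μ B ∧ μ B < μ A)
    (hinf : μ Set.univ = ⊤)
    (r : ℕ → ℝ≥0∞) (hr0 : ∀ n, 0 < r n) (hrt : ∀ n, r n < ⊤) :
    ∃ A : ℕ → Set Ω, (∀ n, MeasurableSet (A n)) ∧ Pairwise (Function.onFun Disjoint A) ∧
      ∀ n, r n / 2 ≤ μ (A n) ∧ μ (A n) ≤ r n := by
  have compl_top : ∀ U : Set Ω, μ U < ⊤ → μ Uᶜ = ⊤ := by
    intro U hU
    by_contra h
    have h1 : μ Set.univ ≤ μ U + μ Uᶜ := by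
      calc μ Set.univ = μ (U ∪ Uᶜ) := by rw [Set.union_compl_self]
        _ ≤ μ U + μ Uᶜ := measure_union_le _ _
    have h2 : μ U + μ Uᶜ < ⊤ := ENNReal.add_lt_top.mpr ⟨hU, lt_top_iff_ne_top.mpr h⟩
    rw [hinf] at h1
    exact absurd (lt_of_le_of_lt h1 h2) (lt_irrefl ⊤)
  have key : ∀ n : ℕ, ∀ U : Set Ω, MeasurableSet U → μ U < ⊤ →
      ∃ B ⊆ Uᶜ, MeasurableSet B ∧ r n / 2 ≤ μ B ∧ μ B ≤ r n :=
    fun n U hU hUf => aux_carve hna hU.compl (compl_top U hUf) (hr0 n) (hrt n)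
  -- the recursive state : union so far
  let T := {U : Set Ω // MeasurableSet U ∧ μ U < ⊤}
  let pick : ℕ → T → Set Ω := fun n U => (key n U.1 U.2.1 U.2.2).choose
  have pick_spec : ∀ n U, pick n U ⊆ (U : T).1ᶜ ∧ MeasurableSet (pick n U) ∧
      r n / 2 ≤ μ (pick n U) ∧ μ (pick n U) ≤ r n := by
    intro n U
    obtain ⟨h1, h2, h3, h4⟩ := (key n U.1 U.2.1 U.2.2).choose_spec
    exact ⟨h1, h2, h3, h4⟩
  let step : ℕ → T → T := fun n U =>
    ⟨U.1 ∪ pick n U, U.2.1.union (pick_spec n U).2.1,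
      lt_of_le_of_lt (measure_union_le _ _)
        (ENNReal.add_lt_top.mpr ⟨U.2.2, lt_of_le_of_lt (pick_spec n U).2.2.2 (hrt n)⟩)⟩
  let st : ℕ → T := fun n => Nat.rec ⟨∅, MeasurableSet.empty, by simp⟩ step n
  have hst_succ : ∀ n, st (n + 1) = step n (st n) := fun n => rfl
  refine ⟨fun n => pick n (st n), fun n => (pick_spec n (st n)).2.1, ?_, fun n => ⟨(pick_spec n (st n)).2.2.1, (pick_spec n (st n)).2.2.2⟩⟩
  -- monotonicity of the states
  have hmono : ∀ n, (st n).1 ⊆ (st (n + 1)).1 := by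
    intro n
    rw [hst_succ n]
    exact Set.subset_union_left
  have hmono' : Monotone (fun n => (st n).1) := monotone_nat_of_le_succ hmono
  have hsub : ∀ n, pick n (st n) ⊆ (st (n + 1)).1 := by
    intro n
    rw [hst_succ n]
    exact Set.subset_union_right
  have main : ∀ a b, a < b → Disjoint (pick a (st a)) (pick b (st b)) := by
    intro a b hab
    have h1 : pick a (st a) ⊆ (st b).1 := (hsub a).trans (hmono' (show a + 1 ≤ b from hab))
    have h2 : pick b (st b) ⊆ (st b).1ᶜ := (pick_spec b (st b)).1
    exact Set.disjoint_left.mpr fun x hxa hxb => (h2 hxb) (h1 hxa)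
  intro i j hij
  rcases hij.lt_or_gt with h | h
  · exact main i j h
  · exact (main j i h).symm

end Aux

section Main

open Set ENNReal Filter

/-- If `μ` is nonatomic, σ-finite, with `μ(Ω) = ∞`, and the
nonnegative continuous `θ` has finite superposition integral on all of
`Lᵖ(μ)`, then `θ(λ) ≤ a·|λ|^p` for some `a`. -/
theorem stmt18 {Ω : Type*} [MeasurableSpace Ω] (μ : Measure Ω) [SigmaFinite μ]
    (hna : ∀ A : Set Ω, MeasurableSet A → 0 < μ A →
      ∃ B ⊆ A, MeasurableSet B ∧ 0 < μ B ∧ μ B < μ A)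
    (hinf : μ Set.univ = ⊤)
    (p : NNReal) (hp : 1 ≤ p)
    (θ : ℝ → ℝ) (hθc : Continuous θ) (hθ0 : ∀ l : ℝ, 0 ≤ θ l)
    (hfin : ∀ f : Lp ℝ p μ, ∫⁻ t, ENNReal.ofReal (θ (f t)) ∂μ < ⊤) :
    ∃ a : ℝ, ∀ l : ℝ, θ l ≤ a * |l| ^ (p : ℝ) := by
  by_contra hcon
  push_neg at hcon
  have hp0 : (0 : ℝ) < (p : ℝ) := lt_of_lt_of_le one_pos (by exact_mod_cast hp)
  -- θ 0 = 0
  have hθzero : θ 0 = 0 := by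
    have h0 := hfin 0
    have hae : (⇑(0 : Lp ℝ p μ)) =ᵐ[μ] (fun _ => (0 : ℝ)) := Lp.coeFn_zero ℝ _ μ
    have heq : ∫⁻ t, ENNReal.ofReal (θ ((0 : Lp ℝ p μ) t)) ∂μ
        = ENNReal.ofReal (θ 0) * μ Set.univ := by
      rw [lintegral_congr_ae (hae.mono fun x hx => by rw [hx])]
      simp [lintegral_const]
    rw [heq, hinf] at h0
    by_contra hne
    have hpos : 0 < θ 0 := lt_of_le_of_ne (hθ0 0) (Ne.symm hne)
    rw [ENNReal.mul_top (ENNReal.ofReal_pos.mpr hpos).ne'] at h0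
    exact absurd h0 (lt_irrefl ⊤)
  -- choose the sequence lam n
  have hlam : ∀ n : ℕ, ∃ l : ℝ, (4 : ℝ) ^ n * |l| ^ (p : ℝ) < θ l := fun n => hcon (4 ^ n)
  choose lam hlam' using hlam
  have hlamne : ∀ n, lam n ≠ 0 := by
    intro n hne
    have := hlam' n
    rw [hne, abs_zero, Real.zero_rpow hp0.ne', mul_zero, hθzero] at this
    exact absurd this (lt_irrefl 0)
  set tn : ℕ → ℝ := fun n => |lam n| ^ (p : ℝ) with htn
  have htnpos : ∀ n, 0 < tn n := fun n =>
    Real.rpow_pos_of_pos (abs_pos.mpr (hlamne n)) _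
  -- the disjoint family
  set r : ℕ → ℝ≥0∞ := fun n => ENNReal.ofReal ((2⁻¹ : ℝ) ^ n / tn n) with hr
  obtain ⟨A, hAm, hAdis, hAb⟩ := aux_family hna hinf r
    (fun n => ENNReal.ofReal_pos.mpr (div_pos (pow_pos (by norm_num) n) (htnpos n)))
    (fun n => ENNReal.ofReal_lt_top)
  -- the function g
  set g : Ω → ℝ := fun x => ∑' n, (A n).indicator (fun _ => lam n) x with hg
  have hg_mem : ∀ n x, x ∈ A n → g x = lam n := by
    intro n x hx
    have hz : ∀ m, m ≠ n → (A m).indicator (fun _ => lam m) x = 0 := fun m hm =>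
      Set.indicator_of_notMem (fun hxm => Set.disjoint_left.mp (hAdis hm) hxm hx) _
    simp only [hg]
    rw [tsum_eq_single n hz, Set.indicator_of_mem hx]
  have hg_not : ∀ x, x ∉ ⋃ n, A n → g x = 0 := by
    intro x hx
    simp only [hg]
    have : ∀ m : ℕ, (A m).indicator (fun _ => lam m) x = 0 := fun m =>
      Set.indicator_of_notMem (fun h => hx (Set.mem_iUnion.mpr ⟨m, h⟩)) _
    simp only [this, tsum_zero]
  have hsummable : ∀ x, Summable (fun n => (A n).indicator (fun _ => lam n) x) := by
    intro x
    by_cases hx : ∃ n, x ∈ A n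
    · obtain ⟨n₀, hn₀⟩ := hx
      refine summable_of_ne_finset_zero (s := {n₀}) fun m hm => ?_
      simp only [Finset.mem_singleton] at hm
      exact Set.indicator_of_notMem
        (fun hxm => hm (by
          by_contra hmn
          exact Set.disjoint_left.mp (hAdis hmn) hxm hn₀)) _
    · exact summable_of_ne_finset_zero (s := ∅) fun m _ =>
        Set.indicator_of_notMem (fun h => hx ⟨m, h⟩) _
  have hgm : Measurable g := by
    apply measurable_of_tendsto_metrizable
      (f := fun N x => ∑ n ∈ Finset.range N, (A n).indicator (fun _ => lam n) x)
      (fun N => Finset.measurable_sum _ fun n _ => measurable_const.indicator (hAm n))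
    rw [tendsto_pi_nhds]
    exact fun x => (hsummable x).hasSum.tendsto_sum_nat
  -- the splitting identity
  have split : ∀ c : ℝ → ℝ≥0∞, c 0 = 0 →
      ∫⁻ x, c (g x) ∂μ = ∑' n, c (lam n) * μ (A n) := by
    intro c hc0
    have hU : MeasurableSet (⋃ n, A n) := MeasurableSet.iUnion hAm
    rw [← lintegral_add_compl (fun x => c (g x)) hU]
    have h1 : ∫⁻ x in (⋃ n, A n)ᶜ, c (g x) ∂μ = 0 := by
      rw [setLIntegral_congr_fun hU.compl
        (fun x hx => by rw [hg_not x hx, hc0])]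
      simp
    have h2 : ∫⁻ x in ⋃ n, A n, c (g x) ∂μ = ∑' n, c (lam n) * μ (A n) := by
      rw [lintegral_iUnion hAm hAdis]
      refine tsum_congr fun n => ?_
      rw [setLIntegral_congr_fun (hAm n)
        (fun x hx => by rw [hg_mem n x hx])]
      exact setLIntegral_const _ _
    rw [h1, h2, add_zero]
  -- g ∈ Lᵖ
  have hps : (p : ℝ≥0∞) ≠ 0 := by
    simp only [ne_eq, ENNReal.coe_eq_zero]
    exact (lt_of_lt_of_le one_pos hp).ne'
  have hpt : (p : ℝ≥0∞) ≠ ⊤ := ENNReal.coe_ne_top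
  have hmem : MemLp g p μ := by
    refine ⟨hgm.aestronglyMeasurable, ?_⟩
    rw [eLpNorm_lt_top_iff_lintegral_rpow_enorm_lt_top hps hpt]
    simp only [enorm_eq_nnnorm]
    have hc0 : ((‖(0:ℝ)‖₊ : ℝ≥0∞)) ^ ((p:ℝ≥0∞)).toReal = 0 := by
      simp only [nnnorm_zero, ENNReal.coe_zero]
      exact ENNReal.zero_rpow_of_pos (by simpa using hp0)
    rw [split (fun y => ((‖y‖₊ : ℝ≥0∞)) ^ ((p:ℝ≥0∞)).toReal) hc0]
    have hbound : ∀ n, ((‖lam n‖₊ : ℝ≥0∞)) ^ ((p:ℝ≥0∞)).toReal * μ (A n)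
        ≤ ENNReal.ofReal ((2⁻¹ : ℝ) ^ n) := by
      intro n
      have h1 : ((‖lam n‖₊ : ℝ≥0∞)) ^ ((p:ℝ≥0∞)).toReal = ENNReal.ofReal (tn n) := by
        rw [← enorm_eq_nnnorm, Real.enorm_eq_ofReal_abs, ENNReal.ofReal_rpow_of_nonneg (abs_nonneg _)
          (by simpa using hp0.le)]
        simp [htn]
      calc ((‖lam n‖₊ : ℝ≥0∞)) ^ ((p:ℝ≥0∞)).toReal * μ (A n)
          ≤ ENNReal.ofReal (tn n) * r n := by rw [h1]; exact mul_le_mul_right (hAb n).2 _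
        _ = ENNReal.ofReal (tn n * ((2⁻¹ : ℝ) ^ n / tn n)) := by
            simp only [hr]
            rw [← ENNReal.ofReal_mul (htnpos n).le]
        _ = ENNReal.ofReal ((2⁻¹ : ℝ) ^ n) := by
            congr 1
            rw [mul_comm, div_mul_cancel₀ _ (htnpos n).ne']
    calc ∑' n, ((‖lam n‖₊ : ℝ≥0∞)) ^ ((p:ℝ≥0∞)).toReal * μ (A n)
        ≤ ∑' n : ℕ, ENNReal.ofReal ((2⁻¹ : ℝ) ^ n) := ENNReal.tsum_le_tsum hbound
      _ = ∑' n : ℕ, (2⁻¹ : ℝ≥0∞) ^ n := by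
          refine tsum_congr fun n => ?_
          rw [ENNReal.ofReal_pow (by norm_num : (0:ℝ) ≤ 2⁻¹),
            ENNReal.ofReal_inv_of_pos (by norm_num : (0:ℝ) < 2), ENNReal.ofReal_ofNat]
      _ = (1 - 2⁻¹)⁻¹ := ENNReal.tsum_geometric _
      _ < ⊤ := by
          rw [ENNReal.one_sub_inv_two, inv_inv]
          exact ENNReal.ofNat_lt_top
  -- contradiction
  set f : Lp ℝ p μ := hmem.toLp g with hf
  have hae : ⇑f =ᵐ[μ] g := hmem.coeFn_toLp
  have hint : ∫⁻ t, ENNReal.ofReal (θ (g t)) ∂μ < ⊤ := by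
    have := hfin f
    rwa [lintegral_congr_ae (hae.mono fun x hx => by rw [hx])] at this
  rw [split (fun y => ENNReal.ofReal (θ y)) (by show ENNReal.ofReal (θ 0) = 0; rw [hθzero]; simp)] at hint
  have hlb : ∀ n : ℕ, (2⁻¹ : ℝ≥0∞) ≤ ENNReal.ofReal (θ (lam n)) * μ (A n) := by
    intro n
    have hx : (0:ℝ) < (2⁻¹ : ℝ) ^ n / tn n :=
      div_pos (pow_pos (by norm_num) n) (htnpos n)
    have hhalf : r n / 2 = ENNReal.ofReal ((2⁻¹ : ℝ) ^ n / tn n / 2) := by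
      simp only [hr]
      rw [ENNReal.ofReal_div_of_pos (by norm_num : (0:ℝ) < 2)]
      norm_num
    have hterm : ENNReal.ofReal (θ (lam n)) * (r n / 2)
        = ENNReal.ofReal (θ (lam n) * ((2⁻¹ : ℝ) ^ n / tn n / 2)) := by
      rw [hhalf, ← ENNReal.ofReal_mul (hθ0 _)]
    have hreal : (2⁻¹ : ℝ) ≤ θ (lam n) * ((2⁻¹ : ℝ) ^ n / tn n / 2) := by
      have h4 := (hlam' n).le
      have hX : (0:ℝ) ≤ (2⁻¹ : ℝ) ^ n / tn n / 2 := by positivity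
      have e0 : tn n * ((2⁻¹ : ℝ) ^ n / tn n / 2) = (2⁻¹ : ℝ) ^ n / 2 := by
        have hne : (2:ℝ) ^ n * tn n * 2 ≠ 0 :=
          mul_ne_zero (mul_ne_zero (pow_ne_zero _ two_ne_zero) (htnpos n).ne') two_ne_zero
        field_simp
        exact mul_inv_cancel₀ (htnpos n).ne'
      have e1 : (4:ℝ) ^ n * tn n * ((2⁻¹ : ℝ) ^ n / tn n / 2) = 2 ^ n / 2 := by
        rw [mul_assoc, e0, ← mul_div_assoc, ← mul_pow]
        norm_num
      have h2n : (1:ℝ) ≤ 2 ^ n := one_le_pow₀ (by norm_num)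
      have hstep := mul_le_mul_of_nonneg_right h4 hX
      rw [e1] at hstep
      linarith
    calc (2⁻¹ : ℝ≥0∞) = ENNReal.ofReal (2⁻¹ : ℝ) := by
          rw [ENNReal.ofReal_inv_of_pos (by norm_num)]; norm_num
      _ ≤ ENNReal.ofReal (θ (lam n) * ((2⁻¹ : ℝ) ^ n / tn n / 2)) :=
          ENNReal.ofReal_le_ofReal hreal
      _ = ENNReal.ofReal (θ (lam n)) * (r n / 2) := hterm.symm
      _ ≤ ENNReal.ofReal (θ (lam n)) * μ (A n) := mul_le_mul_right (hAb n).1 _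
  have htop : (⊤ : ℝ≥0∞) ≤ ∑' n, ENNReal.ofReal (θ (lam n)) * μ (A n) := by
    calc (⊤ : ℝ≥0∞) = ∑' _ : ℕ, (2⁻¹ : ℝ≥0∞) :=
        (ENNReal.tsum_const_eq_top_of_ne_zero (by norm_num)).symm
      _ ≤ _ := ENNReal.tsum_le_tsum hlb
  exact absurd hint (not_lt.mpr htop)

end Main
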